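/- Suppose I + A_G = λJ + Q + (ae^T + ea^T)/2 with λ ∈ ℝ, Q ⪰ 0, a ∈ ℝ^n_+. Then the relation "i = j or {i,j} ∈ E" is transitive, i.e., G is a disjoint union of cliques. -/

import Mathlib

open Matrix Finset
open scoped Classical

def IsStable {n : ℕ} (G : SimpleGraph (Fin n)) (S : Finset (Fin n)) : Prop :=
  ∀ i ∈ S, ∀ j ∈ S, ¬ G.Adj i j

noncomputable def alpha {n : ℕ} (G : SimpleGraph (Fin n)) : ℕ :=
  sSup {k | ∃ S : Finset (Fin n), IsStable G S ∧ S.card = k}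

noncomputable def indic {n : ℕ} (S : Finset (Fin n)) : Fin n → ℝ :=
  fun i => if i ∈ S then 1 else 0

noncomputable def qform {n : ℕ} (M : Matrix (Fin n) (Fin n) ℝ) (x : Fin n → ℝ) : ℝ :=
  x ⬝ᵥ M.mulVec x

noncomputable def fG {n : ℕ} (G : SimpleGraph (Fin n)) (x : Fin n → ℝ) : ℝ :=
  qform (1 + G.adjMatrix ℝ) x

noncomputable def globMin {n : ℕ} (f : (Fin n → ℝ) → ℝ) : Set (Fin n → ℝ) :=
  {x | x ∈ stdSimplex ℝ (Fin n) ∧ ∀ y ∈ stdSimplex ℝ (Fin n), f x ≤ f y}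

theorem stmt_14 (n : ℕ) (G : SimpleGraph (Fin n))
    (Q : Matrix (Fin n) (Fin n) ℝ) (lam : ℝ) (a : Fin n → ℝ)
    (ha : ∀ i, 0 ≤ a i) (hQ : Q.PosSemidef)
    (hdecomp : (1 : Matrix (Fin n) (Fin n) ℝ) + G.adjMatrix ℝ =
      lam • (Matrix.of fun _ _ => (1:ℝ)) + Q +
        (1/2 : ℝ) • (Matrix.vecMulVec a (fun _ => 1) + Matrix.vecMulVec (fun _ => 1) a)) :
    Transitive (fun i j : Fin n => i = j ∨ G.Adj i j) := by
  intro i j k hij hjk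
  rcases hij with rfl | hij
  · exact hjk
  rcases hjk with rfl | hjk
  · exact Or.inr hij
  by_contra hcon
  push_neg at hcon
  obtain ⟨hik_ne, hik⟩ := hcon
  have hij_ne : i ≠ j := G.ne_of_adj hij
  have hjk_ne : j ≠ k := G.ne_of_adj hjk
  set x : Fin n → ℝ := fun t =>
    (if t = i then (1:ℝ) else 0) + (if t = j then (-2:ℝ) else 0) + (if t = k then (1:ℝ) else 0)
    with hxdef
  have tri : ∀ f : Fin n → ℝ, ∑ t, f t * x t = f i + (-2) * f j + f k := by
    intro f
    simp only [hxdef, mul_add, Finset.sum_add_distrib, mul_ite, mul_one, mul_zero]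
    simp [Finset.sum_ite_eq', mul_comm]
  have hsum : ∑ t, x t = 0 := by
    have := tri (fun _ => (1:ℝ))
    simp only [one_mul] at this
    rw [this]; ring
  have hQx : 0 ≤ x ⬝ᵥ Q.mulVec x := hQ.dotProduct_mulVec_nonneg x
  have hki : ¬ G.Adj k i := fun h => hik (G.adj_symm h)
  have hLHS : x ⬝ᵥ ((1 + G.adjMatrix ℝ).mulVec x) = -2 := by
    rw [dotProduct_comm]
    simp only [dotProduct, Matrix.mulVec, tri]
    simp [Matrix.add_apply, Matrix.one_apply, hij, hjk, hik, G.adj_symm hij, G.adj_symm hjk,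
      hij_ne, hjk_ne, hik_ne, hij_ne.symm, hjk_ne.symm, hik_ne.symm, hki, G.loopless.irrefl i, G.loopless.irrefl j, G.loopless.irrefl k]
    ring_nf
  have hRHS : x ⬝ᵥ ((lam • (Matrix.of fun _ _ => (1:ℝ)) + Q +
        (1/2 : ℝ) • (Matrix.vecMulVec a (fun _ => 1) + Matrix.vecMulVec (fun _ => 1) a)).mulVec x)
      = x ⬝ᵥ Q.mulVec x := by
    simp only [Matrix.add_mulVec, Matrix.smul_mulVec, dotProduct_add,
      dotProduct_smul]
    have h1 : ((Matrix.of fun _ _ => (1:ℝ)) : Matrix (Fin n) (Fin n) ℝ).mulVec x = fun _ => ∑ t, x t := by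
      funext s; simp [Matrix.mulVec, dotProduct]
    have h2 : (Matrix.vecMulVec a (fun _ => (1:ℝ))).mulVec x = (∑ t, x t) • a := by
      funext s; simp [Matrix.vecMulVec_apply, Matrix.mulVec, dotProduct, Finset.mul_sum]
      rw [Finset.sum_mul]; exact Finset.sum_congr rfl fun t _ => mul_comm _ _
    have h3 : ((Matrix.vecMulVec (fun _ => (1:ℝ)) a : Matrix (Fin n) (Fin n) ℝ)).mulVec x = fun _ => a ⬝ᵥ x := by
      funext s; simp [Matrix.vecMulVec_apply, Matrix.mulVec, dotProduct]
    rw [h1, h2, h3]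
    have hx0 : ∀ v : Fin n → ℝ, x ⬝ᵥ (fun _ => v ⬝ᵥ x) = 0 := by
      intro v
      simp only [dotProduct]
      rw [← Finset.sum_mul, hsum, zero_mul]
    rw [hsum]
    simp only [zero_smul, dotProduct_zero]
    have e3 := hx0 a
    rw [e3]
    simp
  rw [hdecomp, hRHS] at hLHS
  linarith
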